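/- Let D be a self-adjoint operator on H and a ∈ B(H) weakly D-differentiable. Then a maps dom(D) into dom(D), and the operator Da − aD (defined on dom(D)) is bounded, with closure equal to wD(a). -/

import Mathlib

open Complex Filter Topology MeasureTheory
open scoped Topology

local notation "⟪" x ", " y "⟫" => @inner ℂ _ _ x y

variable {H : Type*} [NormedAddCommGroup H] [InnerProductSpace ℂ H] [CompleteSpace H]

/-- `b` is the bounded operator implementing the commutator form
`(ξ, η) ↦ ⟨aξ, Dη⟩ − ⟨aDξ, η⟩` on `dom D × dom D`; i.e. `a` is weakly `D`-differentiable
with derivative `wD(a) = b`. -/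
def IsWeakDeriv (D : H →ₗ.[ℂ] H) (a b : H →L[ℂ] H) : Prop :=
  ∀ ξ η : D.domain, ⟪b (ξ : H), (η : H)⟫ = ⟪a (ξ : H), D η⟫ - ⟪a (D ξ), (η : H)⟫

/-- `conjAd U t a = U t ∘ a ∘ U (−t)`, i.e. `α_t(a) = e^{itD} a e^{-itD}`. -/
noncomputable def conjAd (U : ℝ → H →L[ℂ] H) (t : ℝ) (a : H →L[ℂ] H) : H →L[ℂ] H :=
  (U t).comp (a.comp (U (-t)))

/-- `U` is the strongly continuous one-parameter unitary group `t ↦ e^{itD}`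
generated by the self-adjoint operator `D` (Stone's theorem characterization). -/
structure IsStoneGroupOf (D : H →ₗ.[ℂ] H) (U : ℝ → H →L[ℂ] H) : Prop where
  map_zero : U 0 = 1
  map_add : ∀ s t : ℝ, U (s + t) = (U s).comp (U t)
  isometry : ∀ (t : ℝ) (ξ : H), ‖U t ξ‖ = ‖ξ‖
  hasDerivAt : ∀ ξ : D.domain, HasDerivAt (fun t : ℝ => U t (ξ : H)) (Complex.I • D ξ) 0
  mem_domain : ∀ ξ v : H, HasDerivAt (fun t : ℝ => U t ξ) v 0 → ξ ∈ D.domain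

/-- If `a` is weakly `D`-differentiable then `a` maps `dom D` into `dom D`,
and `Da − aD` agrees on `dom D` with the bounded operator `wD(a)`
(so `Da − aD` is bounded with closure `wD(a)`). -/
theorem weakDeriv_domain_invariant_and_commutator_bounded
    (D : H →ₗ.[ℂ] H) (hD : IsSelfAdjoint D)
    (U : ℝ → H →L[ℂ] H) (hU : IsStoneGroupOf D U)
    (a b : H →L[ℂ] H) (hw : IsWeakDeriv D a b) :
    ∀ ξ : D.domain, ∃ h : a (ξ : H) ∈ D.domain,
      D ⟨a (ξ : H), h⟩ - a (D ξ) = b (ξ : H) := by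
  have hA : D.adjoint = D := hD
  have hdense := hD.dense_domain
  intro ξ
  have key : ∀ η : D.domain, ⟪b (ξ : H) + a (D ξ), (η : H)⟫ = ⟪a (ξ : H), D η⟫ := by
    intro η
    rw [inner_add_left, hw ξ η]
    ring
  have hmem : a (ξ : H) ∈ D.adjoint.domain :=
    D.mem_adjoint_domain_of_exists _ ⟨b (ξ : H) + a (D ξ), key⟩
  have hdomeq : D.adjoint.domain = D.domain := congrArg LinearPMap.domain hA
  have hmem' : a (ξ : H) ∈ D.domain := hdomeq.le hmem
  refine ⟨hmem', ?_⟩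
  have happ : D.adjoint ⟨a (ξ : H), hmem⟩ = b (ξ : H) + a (D ξ) :=
    LinearPMap.adjoint_apply_eq hdense _ key
  obtain ⟨hdom, hfun⟩ := LinearPMap.ext_iff.mp hA
  have : D ⟨a (ξ : H), hmem'⟩ = b (ξ : H) + a (D ξ) := by
    rw [← hfun (x := a (ξ : H)) (hf := hmem) (hg := hmem'), happ]
  rw [this]; abel
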